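/- Let n ≥ 2 and define X_k, Xₙ as polynomials on the upper half-space {xₙ > 0} ⊂ ℝⁿ as in the previous context, with 1-form ω = Σᵢ (Xᵢ/xₙ²)dxᵢ. Then the Lie derivative L_X ω = d(i_Xω) + i_X(dω) vanishes identically, where i_Xω = S/xₙ² with S = ΣX_k². -/

import Mathlib

open scoped BigOperators

noncomputable def Hfun {N : ℕ} (a : Fin N → ℝ) (b : ℝ) (x : Fin N → ℝ) : ℝ :=
  (∑ k, a k * x k) + b

noncomputable def Xcomp {N : ℕ} (a : Fin N → ℝ) (b : ℝ) (c : Fin N → ℝ) (k : Fin N)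
    (x : Fin N → ℝ) (y : ℝ) : ℝ :=
  a k / 2 * (x k ^ 2 - ((∑ j ∈ Finset.univ.erase k, x j ^ 2) + y ^ 2)) +
    ((∑ i ∈ Finset.univ.erase k, a i * x i) + b) * x k + c k

noncomputable def Xlast {N : ℕ} (a : Fin N → ℝ) (b : ℝ) (x : Fin N → ℝ) (y : ℝ) : ℝ :=
  Hfun a b x * y

noncomputable def iXw {N : ℕ} (a : Fin N → ℝ) (b : ℝ) (c : Fin N → ℝ)
    (x : Fin N → ℝ) (y : ℝ) : ℝ :=
  ((∑ k, Xcomp a b c k x y ^ 2) + Xlast a b x y ^ 2) / y ^ 2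

lemma hasDerivAt_quadratic (p q r s : ℝ) :
    HasDerivAt (fun s : ℝ => p * s ^ 2 + q * s + r) (2 * p * s + q) s := by
  have h1 := ((hasDerivAt_pow 2 s).const_mul p).add ((hasDerivAt_id s).const_mul q)
  have := h1.add_const r
  simpa [mul_comm, mul_assoc, mul_left_comm] using this

lemma Xcomp_eq {N : ℕ} (a : Fin N → ℝ) (b : ℝ) (c : Fin N → ℝ) (k : Fin N)
    (x : Fin N → ℝ) (y : ℝ) :
    Xcomp a b c k x y =
      a k / 2 * (x k ^ 2 - (((∑ j, x j ^ 2) - x k ^ 2) + y ^ 2)) +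
        (Hfun a b x - a k * x k) * x k + c k := by
  unfold Xcomp Hfun
  rw [Finset.sum_erase_eq_sub (Finset.mem_univ k),
    Finset.sum_erase_eq_sub (Finset.mem_univ k)]
  ring

lemma Hfun_update {N : ℕ} (a : Fin N → ℝ) (b : ℝ) (x : Fin N → ℝ) (m : Fin N) (s : ℝ) :
    Hfun a b (Function.update x m s) = Hfun a b x - a m * x m + a m * s := by
  unfold Hfun
  have h : ∀ k, a k * Function.update x m s k
      = Function.update (fun k => a k * x k) m (a m * s) k := by
    intro k
    rcases eq_or_ne k m with rfl | h
    · simp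
    · simp [Function.update_of_ne h]
  rw [Finset.sum_congr rfl fun k _ => h k,
    Finset.sum_update_of_mem (Finset.mem_univ m), ← Finset.erase_eq,
    Finset.sum_erase_eq_sub (Finset.mem_univ m)]
  ring

lemma sum_sq_update {N : ℕ} (x : Fin N → ℝ) (m : Fin N) (s : ℝ) :
    (∑ j, Function.update x m s j ^ 2) = (∑ j, x j ^ 2) - x m ^ 2 + s ^ 2 := by
  have h : ∀ k, Function.update x m s k ^ 2
      = Function.update (fun k => x k ^ 2) m (s ^ 2) k := by
    intro k
    rcases eq_or_ne k m with rfl | h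
    · simp
    · simp [Function.update_of_ne h]
  rw [Finset.sum_congr rfl fun k _ => h k,
    Finset.sum_update_of_mem (Finset.mem_univ m), ← Finset.erase_eq,
    Finset.sum_erase_eq_sub (Finset.mem_univ m)]
  ring

/-- `L_X ω = d(i_Xω) + i_X(dω) = 0` on the half-space `{xₙ > 0}`: with
`dω = Σ_{i<j≤n−1}(2(a_ix_j − a_jx_i)/xₙ²)dxᵢ∧dxⱼ + Σ_{i≤n−1}(2(Xᵢ + aᵢxₙ²)/xₙ³)dxᵢ∧dxₙ`,
the `dx_m`-component of `i_X(dω)` is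
`(2/xₙ²)Σ_{k≠m}(a_kx_m − a_mx_k)X_k − (2(X_m + a_mxₙ²)/xₙ³)Xₙ` and the
`dxₙ`-component is `Σᵢ (2(Xᵢ + aᵢxₙ²)/xₙ³)Xᵢ`; every component of `L_X ω` vanishes. -/
theorem stmt16 (N : ℕ) (hN : 1 ≤ N) (a : Fin N → ℝ) (b : ℝ) (c : Fin N → ℝ)
    (x : Fin N → ℝ) (y : ℝ) (hy : 0 < y) :
    (∀ m : Fin N,
      deriv (fun s => iXw a b c (Function.update x m s) y) (x m) +
        ((2 / y ^ 2) *
            (∑ k ∈ Finset.univ.erase m, (a k * x m - a m * x k) * Xcomp a b c k x y) -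
          (2 * (Xcomp a b c m x y + a m * y ^ 2) / y ^ 3) * Xlast a b x y) = 0) ∧
    deriv (fun s => iXw a b c x s) y +
      (∑ i, (2 * (Xcomp a b c i x y + a i * y ^ 2) / y ^ 3) * Xcomp a b c i x y) = 0 := by
  have hy0 : y ≠ 0 := ne_of_gt hy
  set T : ℝ := ∑ j, x j ^ 2 with hT
  set H : ℝ := Hfun a b x with hH
  constructor
  · intro m
    -- derivative of each Xcomp in the x m direction
    have hXk : ∀ k : Fin N, HasDerivAt (fun s => Xcomp a b c k (Function.update x m s) y)
        (if k = m then H else a m * x k - a k * x m) (x m) := by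
      intro k
      rcases eq_or_ne k m with rfl | hkm
      · have heq : (fun s => Xcomp a b c k (Function.update x k s) y)
            = fun s => (a k / 2) * s ^ 2 + (H - a k * x k) * s
              + (- (a k / 2) * ((T - x k ^ 2) + y ^ 2) + c k) := by
          funext s
          rw [Xcomp_eq, Hfun_update, sum_sq_update]
          simp only [Function.update_self, ← hT, ← hH]
          ring
        have := hasDerivAt_quadratic (a k / 2) (H - a k * x k)
          (- (a k / 2) * ((T - x k ^ 2) + y ^ 2) + c k) (x k)
        rw [heq, if_pos rfl]
        convert this using 1
        ring
      · have heq : (fun s => Xcomp a b c k (Function.update x m s) y)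
            = fun s => (-(a k / 2)) * s ^ 2 + (a m * x k) * s
              + (a k / 2 * (x k ^ 2 - ((T - x m ^ 2 - x k ^ 2) + y ^ 2))
                + (H - a m * x m - a k * x k) * x k + c k) := by
          funext s
          rw [Xcomp_eq, Hfun_update, sum_sq_update]
          simp only [Function.update_of_ne hkm, ← hT, ← hH]
          ring
        have := hasDerivAt_quadratic (-(a k / 2)) (a m * x k)
          (a k / 2 * (x k ^ 2 - ((T - x m ^ 2 - x k ^ 2) + y ^ 2))
            + (H - a m * x m - a k * x k) * x k + c k) (x m)
        rw [heq, if_neg hkm]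
        convert this using 1
        ring
    have hXl : HasDerivAt (fun s => Xlast a b (Function.update x m s) y) (a m * y) (x m) := by
      have heq : (fun s => Xlast a b (Function.update x m s) y)
          = fun s => (0 : ℝ) * s ^ 2 + (a m * y) * s + (H - a m * x m) * y := by
        funext s
        unfold Xlast
        rw [Hfun_update]
        ring
      have := hasDerivAt_quadratic 0 (a m * y) ((H - a m * x m) * y) (x m)
      rw [heq]
      simpa using this
    have hS : HasDerivAt (fun s => ((∑ k, Xcomp a b c k (Function.update x m s) y ^ 2)
          + Xlast a b (Function.update x m s) y ^ 2) / y ^ 2)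
        (((∑ k, 2 * Xcomp a b c k x y *
            (if k = m then H else a m * x k - a k * x m))
          + 2 * Xlast a b x y * (a m * y)) / y ^ 2) (x m) := by
      have hk2 : ∀ k ∈ Finset.univ (α := Fin N),
          HasDerivAt (fun s => Xcomp a b c k (Function.update x m s) y ^ 2)
            (2 * Xcomp a b c k x y * (if k = m then H else a m * x k - a k * x m)) (x m) := by
        intro k _
        have := ((hXk k).fun_pow 2)
        simpa [Function.update_eq_self, mul_comm, mul_assoc, mul_left_comm] using this
      have hl2 : HasDerivAt (fun s => Xlast a b (Function.update x m s) y ^ 2)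
          (2 * Xlast a b x y * (a m * y)) (x m) := by
        have := hXl.fun_pow 2
        simpa [Function.update_eq_self, mul_comm, mul_assoc, mul_left_comm] using this
      exact ((HasDerivAt.fun_sum hk2).fun_add hl2).div_const (y ^ 2)
    have hderiv : deriv (fun s => iXw a b c (Function.update x m s) y) (x m)
        = (((∑ k, 2 * Xcomp a b c k x y *
            (if k = m then H else a m * x k - a k * x m))
          + 2 * Xlast a b x y * (a m * y)) / y ^ 2) := by
      have : (fun s => iXw a b c (Function.update x m s) y)
          = fun s => ((∑ k, Xcomp a b c k (Function.update x m s) y ^ 2)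
            + Xlast a b (Function.update x m s) y ^ 2) / y ^ 2 := rfl
      rw [this, hS.deriv]
    rw [hderiv]
    -- split off the k = m term
    rw [← Finset.add_sum_erase _ _ (Finset.mem_univ m), if_pos rfl]
    have hsum : (∑ k ∈ Finset.univ.erase m, 2 * Xcomp a b c k x y *
          (if k = m then H else a m * x k - a k * x m))
        = (-2) * ∑ k ∈ Finset.univ.erase m, (a k * x m - a m * x k) * Xcomp a b c k x y := by
      rw [Finset.mul_sum]
      refine Finset.sum_congr rfl fun k hk => ?_
      rw [if_neg (Finset.ne_of_mem_erase hk)]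
      ring
    rw [hsum]
    have hXlast : Xlast a b x y = H * y := rfl
    rw [hXlast]
    set A := ∑ k ∈ Finset.univ.erase m, (a k * x m - a m * x k) * Xcomp a b c k x y
    field_simp
    ring
  · -- derivative in y
    have hXky : ∀ k : Fin N, HasDerivAt (fun s => Xcomp a b c k x s) (-(a k) * y) y := by
      intro k
      have heq : (fun s => Xcomp a b c k x s)
          = fun s => (-(a k / 2)) * s ^ 2 + (0 : ℝ) * s
            + (a k / 2 * (x k ^ 2 - (T - x k ^ 2)) + (H - a k * x k) * x k + c k) := by
        funext s
        rw [Xcomp_eq]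
        simp only [← hT, ← hH]
        ring
      have := hasDerivAt_quadratic (-(a k / 2)) 0
        (a k / 2 * (x k ^ 2 - (T - x k ^ 2)) + (H - a k * x k) * x k + c k) y
      rw [heq]
      convert this using 1
      ring
    have hXly : HasDerivAt (fun s => Xlast a b x s) H y := by
      have heq : (fun s => Xlast a b x s) = fun s => (0 : ℝ) * s ^ 2 + H * s + 0 := by
        funext s; unfold Xlast; ring
      have := hasDerivAt_quadratic 0 H 0 y
      rw [heq]; simpa using this
    have hnum : HasDerivAt (fun s => (∑ k, Xcomp a b c k x s ^ 2) + Xlast a b x s ^ 2)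
        ((∑ k, 2 * Xcomp a b c k x y * (-(a k) * y)) + 2 * Xlast a b x y * H) y := by
      have hk2 : ∀ k ∈ Finset.univ (α := Fin N),
          HasDerivAt (fun s => Xcomp a b c k x s ^ 2)
            (2 * Xcomp a b c k x y * (-(a k) * y)) y := by
        intro k _
        have := (hXky k).fun_pow 2
        simpa [mul_comm, mul_assoc, mul_left_comm] using this
      have hl2 : HasDerivAt (fun s => Xlast a b x s ^ 2) (2 * Xlast a b x y * H) y := by
        have := hXly.fun_pow 2
        simpa [mul_comm, mul_assoc, mul_left_comm] using this
      exact (HasDerivAt.fun_sum hk2).fun_add hl2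
    have hden : HasDerivAt (fun s : ℝ => s ^ 2) (2 * y) y := by
      simpa using hasDerivAt_pow 2 y
    have hdiv := hnum.div hden (by positivity)
    have hderiv : deriv (fun s => iXw a b c x s) y
        = ((((∑ k, 2 * Xcomp a b c k x y * (-(a k) * y)) + 2 * Xlast a b x y * H) * y ^ 2
          - ((∑ k, Xcomp a b c k x y ^ 2) + Xlast a b x y ^ 2) * (2 * y)) / (y ^ 2) ^ 2) := by
      exact hdiv.deriv
    rw [hderiv]
    have h1 : (∑ k, 2 * Xcomp a b c k x y * (-(a k) * y))
        = (-2) * y * ∑ k, a k * Xcomp a b c k x y := by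
      rw [Finset.mul_sum]
      exact Finset.sum_congr rfl fun k _ => by ring
    have h2 : (∑ i, (2 * (Xcomp a b c i x y + a i * y ^ 2) / y ^ 3) * Xcomp a b c i x y)
        = (2 / y ^ 3) * (∑ k, Xcomp a b c k x y ^ 2)
          + (2 / y) * (∑ k, a k * Xcomp a b c k x y) := by
      rw [Finset.mul_sum, Finset.mul_sum, ← Finset.sum_add_distrib]
      refine Finset.sum_congr rfl fun k _ => ?_
      field_simp
    rw [h1, h2]
    have hXlast : Xlast a b x y = H * y := rfl
    rw [hXlast]
    set B := ∑ k, a k * Xcomp a b c k x y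
    set C := ∑ k, Xcomp a b c k x y ^ 2
    field_simp
    ring
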